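/- arXiv:1001.0157 — 5 statements merged into one kernel-verified Lean document; each statement's English description precedes it below -/
import Mathlib

section
/- Let L/k be a finite Galois extension of fields with Galois group G, and let V be an L-vector space equipped with a G-semilinear action (i.e., an action of G on V by k-linear maps such that g(x·v) = g(x)·g(v) for all g ∈ G, x ∈ L, v ∈ V). Then the natural map L ⊗_k V^G → V, given by x ⊗ v ↦ x·v, is an isomorphism of L-vector spaces, where V^G denotes the k-subspace of G-invariant elements. -/
open TensorProduct Finset

theorem speiser_li (k L : Type*) [Field k] [Field L] [Algebra k L]
    [FiniteDimensional k L] [IsGalois k L]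
    (V : Type*) [AddCommGroup V] [Module k V] [Module L V] [IsScalarTower k L V]
    (σ : (L ≃ₐ[k] L) → V →ₗ[k] V)
    (hsemi : ∀ (g : L ≃ₐ[k] L) (x : L) (v : V), σ g (x • v) = g x • σ g v)
    {ι : Type*} (w : ι → V)
    (hfix : ∀ i g, σ g (w i) = w i)
    (hli : LinearIndependent k w) : LinearIndependent L w := by
  classical
  have hbot : IntermediateField.fixedField (⊤ : Subgroup (L ≃ₐ[k] L)) = ⊥ :=
    ((IsGalois.tfae (F := k) (E := L)).out 0 1).mp (inferInstance : IsGalois k L)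
  rw [linearIndependent_iff']
  intro s
  induction s using Finset.strongInduction with
  | _ s ih =>
    intro c hc
    by_contra h
    push_neg at h
    obtain ⟨i₀, hi₀s, hi₀⟩ := h
    set c' : ι → L := fun i => (c i₀)⁻¹ * c i with hc'def
    have hc'i₀ : c' i₀ = 1 := inv_mul_cancel₀ hi₀
    have hc'0 : ∑ i ∈ s, c' i • w i = 0 := by
      have h2 : ∑ i ∈ s, c' i • w i = (c i₀)⁻¹ • ∑ i ∈ s, c i • w i := by
        rw [Finset.smul_sum]
        exact Finset.sum_congr rfl fun i _ => by rw [hc'def, mul_smul]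
      rw [h2, hc, smul_zero]
    have hgfix : ∀ g : L ≃ₐ[k] L, ∀ i ∈ s, g (c' i) = c' i := by
      intro g
      have hg0 : ∑ i ∈ s, (g (c' i) - c' i) • w i = 0 := by
        have h1 : ∑ i ∈ s, g (c' i) • w i = 0 := by
          have h3 := congrArg (σ g) hc'0
          rw [map_sum, map_zero] at h3
          rw [← h3]
          exact Finset.sum_congr rfl fun i _ => by rw [hsemi, hfix]
        calc ∑ i ∈ s, (g (c' i) - c' i) • w i
            = ∑ i ∈ s, g (c' i) • w i - ∑ i ∈ s, c' i • w i := by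
              rw [← Finset.sum_sub_distrib]
              exact Finset.sum_congr rfl fun i _ => sub_smul _ _ _
          _ = 0 := by rw [h1, hc'0, sub_zero]
      have hg0' : ∑ i ∈ s.erase i₀, (g (c' i) - c' i) • w i = 0 := by
        have h4 := Finset.add_sum_erase s (fun i => (g (c' i) - c' i) • w i) hi₀s
        rw [hg0] at h4
        simp only [hc'i₀, map_one, sub_self, zero_smul, zero_add] at h4
        exact h4
      have h5 := ih (s.erase i₀) (Finset.erase_ssubset hi₀s) _ hg0'
      intro i hi
      rcases eq_or_ne i i₀ with rfl | hne
      · rw [hc'i₀, map_one]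
      · exact sub_eq_zero.mp (h5 i (Finset.mem_erase.2 ⟨hne, hi⟩))
    have hex : ∀ i ∈ s, ∃ a : k, algebraMap k L a = c' i := by
      intro i hi
      have hmem : c' i ∈ IntermediateField.fixedField (⊤ : Subgroup (L ≃ₐ[k] L)) :=
        fun g => hgfix g.1 i hi
      rw [hbot] at hmem
      exact IntermediateField.mem_bot.mp hmem
    set a : ι → k := fun i => if h : i ∈ s then (hex i h).choose else 0 with ha
    have hsum : ∑ i ∈ s, a i • w i = 0 := by
      rw [← hc'0]
      refine Finset.sum_congr rfl fun i hi => ?_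
      simp only [ha, dif_pos hi]
      rw [← algebraMap_smul (A := L) (hex i hi).choose (w i), (hex i hi).choose_spec]
    have := linearIndependent_iff'.mp hli s a hsum i₀ hi₀s
    have h6 : c' i₀ = 0 := by
      rw [← (hex i₀ hi₀s).choose_spec]
      have : a i₀ = (hex i₀ hi₀s).choose := by simp only [ha, dif_pos hi₀s]
      rw [← this, ‹a i₀ = 0›, map_zero]
    rw [hc'i₀] at h6
    exact one_ne_zero h6

theorem speiser_dual (k L : Type*) [Field k] [Field L] [Algebra k L]
    [FiniteDimensional k L] [IsGalois k L] :
    ∃ x c : (L ≃ₐ[k] L) → L, (∑ h, c h * (x h)) = 1 ∧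
      ∀ g : L ≃ₐ[k] L, g ≠ 1 → ∑ h, c h * g (x h) = 0 := by
  classical
  set G := L ≃ₐ[k] L
  have e : G ≃ Fin (Module.finrank k L) :=
    Fintype.equivFinOfCardEq (Nat.card_eq_fintype_card.symm.trans (IsGalois.card_aut_eq_finrank k L))
  set b : Module.Basis G k L := (Module.finBasis k L).reindex e.symm with hb
  set A : Matrix G G L := Matrix.of fun g h => g (b h) with hA
  -- linear independence of the algebra maps over L
  have hliG : LinearIndependent L (fun g : G => (g : L ≃ₐ[k] L).toLinearMap) := by
    have hinj : Function.Injective (fun g : G => (g : L ≃ₐ[k] L).toAlgHom) := by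
      intro g₁ g₂ h
      ext x
      exact congrArg (fun f => f x) (congrArg AlgHom.toLinearMap h)
    exact (linearIndependent_toLinearMap k L L).comp (fun g : G => (g : L ≃ₐ[k] L).toAlgHom) hinj
  have hker : ∀ v : G → L, A.transpose.mulVec v = 0 → v = 0 := by
    intro v hv
    have hF : (∑ g : G, v g • (g : L ≃ₐ[k] L).toLinearMap) = 0 := by
      apply b.ext
      intro h
      simp only [LinearMap.sum_apply, LinearMap.smul_apply, LinearMap.zero_apply,
        AlgEquiv.toLinearMap_apply]
      have := congrFun hv h
      simp only [Matrix.mulVec, dotProduct, Matrix.transpose_apply, hA,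
        Matrix.of_apply, Pi.zero_apply] at this
      rw [← this]
      exact Finset.sum_congr rfl fun g _ => by rw [smul_eq_mul, mul_comm]
    exact funext (Fintype.linearIndependent_iff.mp hliG v hF)
  have hdet : A.det ≠ 0 := by
    rw [← Matrix.det_transpose]
    intro h0
    obtain ⟨v, hv0, hv⟩ := (Matrix.exists_mulVec_eq_zero_iff).mpr h0
    exact hv0 (hker v hv)
  set cvec : G → L := A⁻¹.mulVec (Pi.single 1 1) with hcvec
  have hmv : A.mulVec cvec = Pi.single 1 1 := by
    rw [hcvec, Matrix.mulVec_mulVec, Matrix.mul_nonsing_inv _ (isUnit_iff_ne_zero.mpr hdet),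
      Matrix.one_mulVec]
  have key : ∀ g : G, ∑ h, cvec h * g (b h) = (Pi.single 1 1 : G → L) g := by
    intro g
    have hg := congrFun hmv g
    simp only [Matrix.mulVec, dotProduct, hA, Matrix.of_apply] at hg
    rw [← hg]
    exact Finset.sum_congr rfl fun h _ => mul_comm _ _
  refine ⟨b, cvec, ?_, ?_⟩
  · have := key 1
    rw [Pi.single_eq_same] at this
    exact this
  · intro g hg
    have := key g
    rwa [Pi.single_eq_of_ne hg] at this


/-- The natural map `L ⊗ₖ W → V`, `x ⊗ w ↦ x • w`, for a `k`-submodule `W` of the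
`L`-vector space `V`. -/
noncomputable def speiserMap (k L V : Type*) [Field k] [Field L] [Algebra k L]
    [AddCommGroup V] [Module k V] [Module L V] [IsScalarTower k L V]
    (W : Submodule k V) : L ⊗[k] W →ₗ[k] V :=
  TensorProduct.lift (LinearMap.mk₂ k (fun (x : L) (w : W) => x • (w : V))
    (fun a b w => add_smul a b (w : V))
    (fun c a w => smul_assoc c a (w : V))
    (fun a w₁ w₂ => by simp [smul_add])
    (fun c a w => by show a • ((c • w : W) : V) = c • (a • (w : V)); rw [Submodule.coe_smul]; exact smul_comm a c (w : V) |>.symm ▸ (smul_comm c a (w:V)).symm))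

/-- Speiser's Lemma: if `L/k` is a finite Galois extension with Galois group
`G = L ≃ₐ[k] L`, and `V` is an `L`-vector space with a `G`-semilinear action `σ`,
then the natural map `L ⊗ₖ V^G → V` is an isomorphism of `L`-vector spaces. -/
theorem speiser_lemma (k L : Type*) [Field k] [Field L] [Algebra k L]
    [FiniteDimensional k L] [IsGalois k L]
    (V : Type*) [AddCommGroup V] [Module k V] [Module L V] [IsScalarTower k L V]
    (σ : (L ≃ₐ[k] L) → V →ₗ[k] V)
    (hone : σ 1 = LinearMap.id)
    (hcomp : ∀ g h : L ≃ₐ[k] L, σ (g * h) = σ g ∘ₗ σ h)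
    (hsemi : ∀ (g : L ≃ₐ[k] L) (x : L) (v : V), σ g (x • v) = g x • σ g v)
    (W : Submodule k V) (hW : ∀ v : V, v ∈ W ↔ ∀ g : L ≃ₐ[k] L, σ g v = v) :
    Function.Bijective (speiserMap k L V W) ∧
      ∀ (x : L) (z : L ⊗[k] W), speiserMap k L V W (x • z) = x • speiserMap k L V W z := by
  classical
  have hmap : ∀ (a : L) (w : W), speiserMap k L V W (a ⊗ₜ w) = a • (w : V) := fun a w => rfl
  have hlin : ∀ (x : L) (z : L ⊗[k] W), speiserMap k L V W (x • z) = x • speiserMap k L V W z := by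
    intro x z
    induction z using TensorProduct.induction_on with
    | zero => simp
    | tmul y w =>
      rw [TensorProduct.smul_tmul', hmap, hmap, smul_eq_mul, mul_smul]
    | add z₁ z₂ h1 h2 => rw [smul_add, map_add, map_add, h1, h2, smul_add]
  -- injectivity
  set bw := Module.Basis.ofVectorSpace k W with hbw
  have hliV : LinearIndependent L (fun i => ((bw i : W) : V)) := by
    refine speiser_li k L V σ hsemi _ (fun i g => (hW _).mp (bw i).2 g) ?_
    exact bw.linearIndependent.map' W.subtype W.ker_subtype
  set B := Algebra.TensorProduct.basis L bw with hB
  have hinj : Function.Injective (speiserMap k L V W) := by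
    rw [injective_iff_map_eq_zero]
    intro z hz
    set f := B.repr z with hf
    have hzf : z = ∑ i ∈ f.support, f i • B i := by
      conv_lhs => rw [← B.linearCombination_repr z]
      rw [Finsupp.linearCombination_apply, Finsupp.sum]
    have hz0 : ∑ i ∈ f.support, f i • ((bw i : W) : V) = 0 := by
      rw [← hz]
      conv_rhs => rw [hzf]
      rw [map_sum]
      refine Finset.sum_congr rfl fun i _ => ?_
      rw [hB, Algebra.TensorProduct.basis_repr_symm_apply', hmap]
    have hf0 : ∀ i ∈ f.support, f i = 0 := linearIndependent_iff'.mp hliV f.support f hz0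
    have hfz : f = 0 := Finsupp.ext fun i => by
      by_cases h : i ∈ f.support
      · exact hf0 i h
      · exact Finsupp.notMem_support_iff.mp h
    exact (LinearEquiv.map_eq_zero_iff B.repr).mp hfz
  -- surjectivity
  have hsurj : Function.Surjective (speiserMap k L V W) := by
    obtain ⟨x, c, hc1, hc0⟩ := speiser_dual k L
    intro v
    set t : (L ≃ₐ[k] L) → V := fun h => ∑ g, σ g (x h • v) with ht
    have htW : ∀ h, t h ∈ W := by
      intro h
      refine (hW _).mpr fun g' => ?_
      show σ g' (∑ g, σ g (x h • v)) = ∑ g, σ g (x h • v)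
      rw [map_sum]
      calc ∑ g, σ g' (σ g (x h • v)) = ∑ g, σ (g' * g) (x h • v) :=
            Finset.sum_congr rfl fun g _ => by rw [hcomp]; rfl
        _ = ∑ g, σ g (x h • v) :=
            Fintype.sum_equiv (Equiv.mulLeft g') _ _ fun g => rfl
    have hv : ∑ h, c h • t h = v := by
      have expand : ∀ h, t h = ∑ g, g (x h) • σ g v :=
        fun h => Finset.sum_congr rfl fun g _ => hsemi g (x h) v
      calc ∑ h, c h • t h = ∑ h, ∑ g, (c h * g (x h)) • σ g v := by
            refine Finset.sum_congr rfl fun h _ => ?_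
            rw [expand, Finset.smul_sum]
            exact Finset.sum_congr rfl fun g _ => (mul_smul _ _ _).symm
        _ = ∑ g, (∑ h, c h * g (x h)) • σ g v := by
            rw [Finset.sum_comm]
            exact Finset.sum_congr rfl fun g _ => (Finset.sum_smul).symm
        _ = v := by
            rw [Finset.sum_eq_single 1]
            · simp only [AlgEquiv.one_apply]
              rw [hc1, one_smul, hone]; rfl
            · intro g _ hg
              rw [hc0 g hg, zero_smul]
            · intro h
              exact absurd (Finset.mem_univ 1) h
    refine ⟨∑ h, c h ⊗ₜ (⟨t h, htW h⟩ : W), ?_⟩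
    rw [map_sum, ← hv]
    exact Finset.sum_congr rfl fun h _ => hmap _ _
  exact ⟨⟨hinj, hsurj⟩, hlin⟩
end

section
/- Let L/k be a finite Galois extension with Galois group G, T a finite group with G-action φ : G → Aut(T), and let t_1, …, t_m be representatives of the G-orbits on T. Then the map from the direct sum of fields ⊕_{i=1}^m L^{Stab(t_i)} to (L[T])^G, sending x ∈ L^{Stab(t_i)} to Σ_{g ∈ G/Stab(t_i)} g(x) e_{φ(g)(t_i)}, is a well-defined isomorphism of k-algebras. -/
/-- The semilinear action `g • f = fun t => g (f ((φ g)⁻¹ t))` on `L[T]`. -/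
noncomputable def galFunctionAction {k L : Type*} [Field k] [Field L] [Algebra k L]
    {T : Type*} [Group T] (φ : (L ≃ₐ[k] L) →* MulAut T)
    (g : L ≃ₐ[k] L) (f : T → L) : T → L :=
  fun t => g (f ((φ g)⁻¹ t))

/-- The stabilizer of `t ∈ T` in the Galois group, with respect to the action `φ`. -/
def galStabilizer {k L : Type*} [Field k] [Field L] [Algebra k L]
    {T : Type*} [Group T] (φ : (L ≃ₐ[k] L) →* MulAut T) (t : T) :
    Subgroup (L ≃ₐ[k] L) where
  carrier := {g | φ g t = t}
  one_mem' := by simp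
  mul_mem' := by
    intro a b ha hb
    simp only [Set.mem_setOf_eq, map_mul, MulAut.mul_apply] at *
    rw [hb, ha]
  inv_mem' := by
    intro a ha
    simp only [Set.mem_setOf_eq, map_inv] at *
    exact (MulEquiv.symm_apply_eq (φ a)).2 ha.symm

/-- Let `L/k` be finite Galois with group `G`, `T` a finite group with `G`-action
`φ : G → Aut T`, and `t 0, …, t (m-1)` representatives of the `G`-orbits on `T`. Then
the map `⊕ᵢ L^{Stab(tᵢ)} → (L[T])^G`, sending `x` in the `i`-th fixed field to
`Σ_{g ∈ G/Stab(tᵢ)} g(x) e_{φ(g)(tᵢ)}`, is a well-defined isomorphism of `k`-algebras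
onto the invariant algebra. -/
theorem fixed_fields_iso_invariants (k L : Type*) [Field k] [Field L] [Algebra k L]
    [FiniteDimensional k L] [IsGalois k L]
    (T : Type*) [Group T] [Fintype T] (φ : (L ≃ₐ[k] L) →* MulAut T)
    (m : ℕ) (t : Fin m → T)
    (hreps : ∀ s : T, ∃! i : Fin m, ∃ g : L ≃ₐ[k] L, φ g (t i) = s) :
    ∃ Φ : (Π i : Fin m, IntermediateField.fixedField (galStabilizer φ (t i))) →ₐ[k] (T → L),
      Function.Injective Φ ∧
      (∀ a : T → L, a ∈ Set.range Φ ↔ ∀ g : L ≃ₐ[k] L, galFunctionAction φ g a = a) ∧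
      (∀ (i j : Fin m) (x : IntermediateField.fixedField (galStabilizer φ (t i)))
        (g : L ≃ₐ[k] L),
        Φ (Pi.single i x) (φ g (t j)) = if j = i then g (x : L) else 0) := by
  classical
  have key : ∀ s : T, ∃ q : Fin m × (L ≃ₐ[k] L), φ q.2 (t q.1) = s := by
    intro s
    obtain ⟨i, ⟨g, hg⟩, _⟩ := hreps s
    exact ⟨(i, g), hg⟩
  choose p hp using key
  have huniq : ∀ (s : T) (i : Fin m) (g : L ≃ₐ[k] L), φ g (t i) = s → i = (p s).1 := by
    intro s i g hg
    obtain ⟨i₀, h₀, hu⟩ := hreps s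
    exact (hu i ⟨g, hg⟩).trans (hu (p s).1 ⟨(p s).2, hp s⟩).symm
  have wd : ∀ (i : Fin m) (x : L),
      x ∈ IntermediateField.fixedField (galStabilizer φ (t i)) →
      ∀ g g' : L ≃ₐ[k] L, φ g (t i) = φ g' (t i) → g x = g' x := by
    intro i x hx g g' h
    have hh : g'⁻¹ * g ∈ galStabilizer φ (t i) := by
      show φ (g'⁻¹ * g) (t i) = t i
      rw [map_mul, MulAut.mul_apply, h, map_inv]
      exact (φ g').symm_apply_apply (t i)
    have hfix : (g'⁻¹ * g) x = x := hx ⟨g'⁻¹ * g, hh⟩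
    calc g x = (g' * (g'⁻¹ * g)) x := by rw [mul_inv_cancel_left]
    _ = g' ((g'⁻¹ * g) x) := rfl
    _ = g' x := by rw [hfix]
  set F : (Π i : Fin m, IntermediateField.fixedField (galStabilizer φ (t i))) → (T → L) :=
    fun x s => (p s).2 ((x (p s).1 : L)) with hF
  have hkey : ∀ x (s : T) (i : Fin m) (g : L ≃ₐ[k] L), φ g (t i) = s →
      F x s = g ((x i : L)) := by
    intro x s i g hg
    have hi := huniq s i g hg
    subst hi
    exact wd _ _ (x (p s).1).2 _ _ (by rw [hp s, hg])
  have heval : ∀ x (i : Fin m), F x (t i) = (x i : L) := by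
    intro x i
    simpa using hkey x (t i) i 1 (by simp)
  refine ⟨{ toFun := F,
            map_one' := by funext s; simp [hF],
            map_mul' := by intro x y; funext s; simp [hF],
            map_zero' := by funext s; simp [hF],
            map_add' := by intro x y; funext s; simp [hF],
            commutes' := by
              intro c
              funext s
              simp [hF, Pi.algebraMap_apply, IntermediateField.algebraMap_apply] }, ?_, ?_, ?_⟩
  · intro x y hxy
    funext i
    exact Subtype.ext (by rw [← heval x i, ← heval y i]; exact congrFun hxy (t i))
  · intro a
    constructor
    · rintro ⟨x, rfl⟩ g
      funext s
      show g (F x ((φ g)⁻¹ s)) = F x s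
      set s' := (φ g)⁻¹ s with hs'
      have h1 : F x s' = (p s').2 ((x (p s').1 : L)) := rfl
      have h2 : φ (g * (p s').2) (t (p s').1) = s := by
        rw [map_mul, MulAut.mul_apply, hp s', hs']
        exact (φ g).apply_symm_apply s
      rw [hkey x s (p s').1 (g * (p s').2) h2, h1]
      rfl
    · intro ha
      have hmem : ∀ i : Fin m, a (t i) ∈ IntermediateField.fixedField (galStabilizer φ (t i)) := by
        intro i g
        have hg : φ (g : L ≃ₐ[k] L) (t i) = t i := g.2
        have hinv : ((φ (g : L ≃ₐ[k] L))⁻¹ : MulAut T) (t i) = t i :=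
          (MulEquiv.symm_apply_eq (φ (g : L ≃ₐ[k] L))).2 hg.symm
        have h : (g : L ≃ₐ[k] L) (a (((φ (g : L ≃ₐ[k] L))⁻¹ : MulAut T) (t i))) = a (t i) :=
          congrFun (ha (g : L ≃ₐ[k] L)) (t i)
        rw [hinv] at h
        exact h
      refine ⟨fun i => ⟨a (t i), hmem i⟩, funext fun s => ?_⟩
      show (p s).2 (a (t (p s).1)) = a s
      have hinv : ((φ (p s).2)⁻¹ : MulAut T) s = t (p s).1 :=
        (MulEquiv.symm_apply_eq (φ (p s).2)).2 (hp s).symm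
      have h : (p s).2 (a (((φ (p s).2)⁻¹ : MulAut T) s)) = a s := congrFun (ha (p s).2) s
      rw [hinv] at h
      exact h
  · intro i j x g
    have := hkey (Pi.single i x) (φ g (t j)) j g rfl
    show F (Pi.single i x) (φ g (t j)) = _
    rw [this]
    by_cases hij : j = i
    · subst hij
      simp
    · simp [Pi.single_eq_of_ne hij, hij]
end

section
/- Let k be a field, N and T finite groups with an action ψ : N → Aut(T), and let k[T] ⋊ kN be the smash product algebra with product (e_{t_1} ⊗ n_1)(e_{t_2} ⊗ n_2) = δ_{t_1, ψ(n_1)(t_2)} e_{t_1} ⊗ n_1 n_2. If the characteristic of k does not divide |N|, then k[T] ⋊ kN is a semisimple k-algebra. -/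
namespace SmashAux

variable {k : Type*} [Field k]
  {T N : Type*} [Group T] [Group N] [Fintype T] [Fintype N] [DecidableEq T]
  (ψ : N →* MulAut T)
  {R : Type*} [Ring R] [Algebra k R] (e : ((T × N) →₀ k) ≃ₗ[k] R)

/-- basis elements -/
noncomputable def EE (t : T) (n : N) : R := e (Finsupp.single (t, n) 1)

noncomputable def uu (n : N) : R := ∑ t, EE e t n

noncomputable def aa (t : T) : R := EE e t 1

variable (hmul : ∀ (t₁ t₂ : T) (n₁ n₂ : N) (c d : k),
      e (Finsupp.single (t₁, n₁) c) * e (Finsupp.single (t₂, n₂) d) =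
        if t₁ = ψ n₁ t₂ then e (Finsupp.single (t₁, n₁ * n₂) (c * d)) else 0)

include ψ hmul

lemma EE_mul (t₁ t₂ : T) (n₁ n₂ : N) :
    EE e t₁ n₁ * EE e t₂ n₂ = if t₁ = ψ n₁ t₂ then EE e t₁ (n₁ * n₂) else 0 := by
  simpa [EE] using hmul t₁ t₂ n₁ n₂ 1 1

lemma aa_mul (t s : T) : aa e t * aa e s = if t = s then aa e t else 0 := by
  have := EE_mul ψ e hmul t s 1 1
  simpa [aa, map_one] using this

lemma aa_mul_self (t : T) : aa e t * aa e t = aa e t := by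
  simp [aa_mul ψ e hmul]

lemma uu_mul (n m : N) : uu e n * uu e m = uu e (n * m) := by
  classical
  unfold uu
  rw [Finset.sum_mul_sum]
  simp only [EE_mul ψ e hmul]
  rw [Finset.sum_comm]
  have h1 : ∀ s : T, (∑ t : T, if t = ψ n s then EE e t (n * m) else 0)
      = EE (R := R) e (ψ n s) (n * m) := by
    intro s
    rw [Finset.sum_ite_eq' Finset.univ (ψ n s) (fun t => EE e t (n * m))]
    simp
  rw [Finset.sum_congr rfl fun s _ => h1 s]
  exact Fintype.sum_equiv (ψ n).toEquiv _ _ (fun s => rfl)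

omit ψ hmul in
/-- the basis -/
noncomputable def B : Module.Basis (T × N) k R := Module.Basis.ofRepr e.symm

omit ψ hmul in
lemma B_apply (p : T × N) : B e p = EE e p.1 p.2 := by
  apply e.symm.injective
  have : (B e).repr (B e p) = Finsupp.single p 1 := Module.Basis.repr_self _ _
  simpa [B, EE] using this

lemma uu_one_mulLeft : LinearMap.mulLeft k (uu (R := R) e 1) = LinearMap.id := by
  apply Module.Basis.ext (B e)
  intro p
  rw [B_apply]
  obtain ⟨t, n⟩ := p
  simp only [LinearMap.mulLeft_apply, LinearMap.id_coe, id_eq]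
  unfold uu
  rw [Finset.sum_mul]
  simp only [EE_mul ψ e hmul]
  simp only [map_one ψ, MulAut.one_apply, one_mul]
  rw [Finset.sum_ite_eq' Finset.univ t (fun s => EE e s n)]
  simp

lemma uu_one : uu (R := R) e 1 = 1 := by
  have h := congrArg (fun f => f 1) (uu_one_mulLeft ψ e hmul)
  simpa using h

lemma sum_aa : ∑ t, aa (R := R) e t = 1 := uu_one ψ e hmul

lemma aa_mul_uu (t : T) (n : N) : aa e t * uu e n = EE e t n := by
  unfold aa uu
  rw [Finset.mul_sum]
  simp only [EE_mul ψ e hmul]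
  simp only [map_one ψ, MulAut.one_apply, one_mul]
  have : ∀ s : T, (if t = s then EE (R := R) e t n else 0) = if s = t then EE e t n else 0 := by
    intro s; simp [eq_comm]
  rw [Finset.sum_congr rfl fun s _ => this s]
  rw [Finset.sum_ite_eq' Finset.univ t (fun _ => EE e t n)]
  simp

lemma uu_mul_aa (n : N) (t : T) : uu e n * aa e t = aa e (ψ n t) * uu e n := by
  trans EE e (ψ n t) n
  · unfold aa uu
    rw [Finset.sum_mul]
    simp only [EE_mul ψ e hmul, mul_one]
    rw [Finset.sum_ite_eq' Finset.univ (ψ n t) (fun s => EE e s n)]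
    simp
  · exact (aa_mul_uu ψ e hmul (ψ n t) n).symm

lemma uu_inv_cancel (n : N) : uu (R := R) e n * uu e n⁻¹ = 1 := by
  rw [uu_mul ψ e hmul, mul_inv_cancel, uu_one ψ e hmul]

lemma inv_uu_cancel (n : N) : uu (R := R) e n⁻¹ * uu e n = 1 := by
  rw [uu_mul ψ e hmul, inv_mul_cancel, uu_one ψ e hmul]

end SmashAux

open SmashAux in
/-- Let `k` be a field, `N`, `T` finite groups with an action `ψ : N → Aut T`, and let `R` be
the smash product algebra `k[T] ⋊ kN`, i.e. any `k`-algebra with `k`-basis indexed by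
`T × N` (a `k`-linear equivalence `e : (T × N →₀ k) ≃ R`) whose multiplication satisfies
`(e_{t₁} ⊗ n₁)(e_{t₂} ⊗ n₂) = δ_{t₁, ψ(n₁)(t₂)} e_{t₁} ⊗ n₁n₂`. If `char k` does not
divide `|N|`, then `R` is a semisimple `k`-algebra. -/
theorem smash_product_semisimple (k : Type*) [Field k]
    (T N : Type*) [Group T] [Group N] [Fintype T] [Fintype N] [DecidableEq T]
    (ψ : N →* MulAut T)
    (R : Type*) [Ring R] [Algebra k R] (e : ((T × N) →₀ k) ≃ₗ[k] R)
    (hmul : ∀ (t₁ t₂ : T) (n₁ n₂ : N) (c d : k),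
      e (Finsupp.single (t₁, n₁) c) * e (Finsupp.single (t₂, n₂) d) =
        if t₁ = ψ n₁ t₂ then e (Finsupp.single (t₁, n₁ * n₂) (c * d)) else 0)
    (hchar : ¬ (ringChar k ∣ Fintype.card N)) :
    IsSemisimpleRing R := by
  classical
  have hcard : (Fintype.card N : k) ≠ 0 := fun h => hchar ((ringChar.spec k _).mp h)
  refine (isSemisimpleModule_iff R R).2 (ComplementedLattice.mk ?_)
  intro V
  -- a k-linear projection π₀ : R → V
  obtain ⟨W₀, hW₀⟩ := Submodule.exists_isCompl (V.restrictScalars k)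
  set p := (V.restrictScalars k).linearProjOfIsCompl W₀ hW₀ with hp
  set π₀ : R →ₗ[k] R := (V.restrictScalars k).subtype.comp p with hπ₀def
  have hπ₀mem : ∀ x, π₀ x ∈ V := fun x => (p x).2
  have hπ₀id : ∀ v ∈ V, π₀ v = v := by
    intro v hv
    have : p v = ⟨v, hv⟩ := Submodule.linearProjOfIsCompl_apply_left hW₀ ⟨v, hv⟩
    simp [hπ₀def, this]
  set c : k := (Fintype.card N : k)⁻¹ with hc
  set π : R →ₗ[k] R := c • ∑ n : N, ∑ t : T,
      (LinearMap.mulLeft k (uu e n * aa e t)).comp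
        (π₀.comp (LinearMap.mulLeft k (aa e t * uu e n⁻¹))) with hπdef
  have hπapp : ∀ x, π x =
      c • ∑ n : N, ∑ t : T, (uu e n * aa e t) * π₀ ((aa e t * uu e n⁻¹) * x) := by
    intro x
    simp [hπdef, LinearMap.sum_apply, mul_assoc]
  -- π maps into V
  have hmem : ∀ x, π x ∈ V := by
    intro x
    rw [hπapp]
    refine Submodule.smul_of_tower_mem V c
      (Submodule.sum_mem _ fun n _ => Submodule.sum_mem _ fun t _ => ?_)
    simpa [smul_eq_mul] using V.smul_mem (uu e n * aa e t) (hπ₀mem ((aa e t * uu e n⁻¹) * x))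
  -- π is the identity on V
  have hid : ∀ v ∈ V, π v = v := by
    intro v hv
    rw [hπapp]
    have h1 : ∀ n : N, ∀ t : T, (uu e n * aa e t) * π₀ ((aa e t * uu e n⁻¹) * v)
        = uu e n * (aa e t * (uu e n⁻¹ * v)) := by
      intro n t
      rw [hπ₀id _ (by simpa [smul_eq_mul] using V.smul_mem (aa e t * uu e n⁻¹) hv)]
      simp only [mul_assoc]
      congr 1
      rw [← mul_assoc, aa_mul_self ψ e hmul]
    have h2 : ∀ n : N, (∑ t : T, (uu e n * aa e t) * π₀ ((aa e t * uu e n⁻¹) * v)) = v := by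
      intro n
      rw [Finset.sum_congr rfl fun t _ => h1 n t, ← Finset.mul_sum, ← Finset.sum_mul,
        sum_aa ψ e hmul, one_mul, ← mul_assoc, uu_inv_cancel ψ e hmul, one_mul]
    rw [Finset.sum_congr rfl fun n _ => h2 n, Finset.sum_const, Finset.card_univ,
      ← Nat.cast_smul_eq_nsmul k, smul_smul, hc, inv_mul_cancel₀ hcard, one_smul]
  -- π commutes with left multiplication by uu m
  have hU : ∀ (m : N) (x : R), π (uu e m * x) = uu e m * π x := by
    intro m x
    rw [hπapp, hπapp]
    have key : ∀ n : N,
        uu e m * (∑ t : T, (uu e n * aa e t) * π₀ ((aa e t * uu e n⁻¹) * x))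
        = ∑ t : T, (uu e (m * n) * aa e t) * π₀ ((aa e t * uu e (m * n)⁻¹) * (uu e m * x)) := by
      intro n
      rw [Finset.mul_sum]
      refine Finset.sum_congr rfl fun t _ => ?_
      have h1 : (aa e t * uu e (m * n)⁻¹) * (uu e m * x) = (aa e t * uu e n⁻¹) * x := by
        rw [mul_inv_rev, ← uu_mul ψ e hmul n⁻¹ m⁻¹]
        simp only [mul_assoc]
        congr 2
        rw [← mul_assoc, inv_uu_cancel ψ e hmul, one_mul]
      have h2 : uu e (m * n) * aa e t = uu e m * (uu e n * aa e t) := by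
        rw [← uu_mul ψ e hmul, mul_assoc]
      rw [h1, h2]
      simp [mul_assoc]
    calc c • ∑ n : N, ∑ t : T, (uu e n * aa e t) * π₀ ((aa e t * uu e n⁻¹) * (uu e m * x))
        = c • ∑ n : N, uu e m * (∑ t : T, (uu e n * aa e t) * π₀ ((aa e t * uu e n⁻¹) * x)) := by
          congr 1
          refine (Fintype.sum_equiv (Equiv.mulLeft m)
            (fun n => uu e m * (∑ t : T, (uu e n * aa e t) * π₀ ((aa e t * uu e n⁻¹) * x)))
            _ fun n => ?_).symm
          simpa using key n
      _ = uu e m * (c • ∑ n : N, ∑ t : T, (uu e n * aa e t) * π₀ ((aa e t * uu e n⁻¹) * x)) := by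
          rw [← Finset.mul_sum, mul_smul_comm]
  -- π commutes with left multiplication by aa s
  have hA : ∀ (s : T) (x : R), π (aa e s * x) = aa e s * π x := by
    intro s x
    rw [hπapp, hπapp, mul_smul_comm, Finset.mul_sum]
    congr 1
    refine Finset.sum_congr rfl fun n _ => ?_
    rw [Finset.mul_sum]
    have hpsi : ψ n (ψ n⁻¹ s) = s := by simp
    have hsu : aa e s * uu e n = uu e n * aa e (ψ n⁻¹ s) := by
      rw [uu_mul_aa ψ e hmul n (ψ n⁻¹ s), hpsi]
    have hL : ∀ t : T, uu e n * aa e t * π₀ (aa e t * uu e n⁻¹ * (aa e s * x))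
        = if t = ψ n⁻¹ s then uu e n * aa e t * π₀ (aa e t * (uu e n⁻¹ * x)) else 0 := by
      intro t
      have h1 : aa e t * uu e n⁻¹ * (aa e s * x)
          = (if t = ψ n⁻¹ s then aa e t else 0) * (uu e n⁻¹ * x) := by
        rw [mul_assoc, ← mul_assoc (uu e n⁻¹), uu_mul_aa ψ e hmul n⁻¹ s,
          mul_assoc, ← mul_assoc (aa e t), aa_mul ψ e hmul]
      rw [h1]
      by_cases h : t = ψ n⁻¹ s
      · rw [if_pos h, if_pos h]
      · rw [if_neg h, if_neg h, zero_mul, map_zero, mul_zero]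
    have hR2 : ∀ t : T, aa e s * (uu e n * aa e t * π₀ (aa e t * uu e n⁻¹ * x))
        = if t = ψ n⁻¹ s then uu e n * aa e t * π₀ (aa e t * (uu e n⁻¹ * x)) else 0 := by
      intro t
      by_cases h : t = ψ n⁻¹ s
      · rw [if_pos h, ← mul_assoc, ← mul_assoc, hsu, h, mul_assoc (uu e n),
          aa_mul_self ψ e hmul, mul_assoc (aa e (ψ n⁻¹ s)) (uu e n⁻¹) x]
      · rw [if_neg h, ← mul_assoc, ← mul_assoc, hsu, mul_assoc (uu e n),
          aa_mul ψ e hmul, if_neg (fun hh => h hh.symm), mul_zero, zero_mul]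
    rw [Finset.sum_congr rfl fun t _ => hL t, Finset.sum_congr rfl fun t _ => hR2 t]
  -- π is R-linear
  have hR : ∀ (r x : R), π (r * x) = r * π x := by
    intro r x
    have h : π.comp (LinearMap.mulRight k x) = LinearMap.mulRight k (π x) := by
      apply Module.Basis.ext (B e)
      intro p'
      rw [B_apply]
      obtain ⟨t, n⟩ := p'
      simp only [LinearMap.comp_apply, LinearMap.mulRight_apply]
      rw [← aa_mul_uu ψ e hmul, mul_assoc, hA, hU, ← mul_assoc]
    simpa using LinearMap.congr_fun h r
  set πR : R →ₗ[R] R :=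
    { toFun := π
      map_add' := map_add π
      map_smul' := fun r x => by simpa [smul_eq_mul] using hR r x } with hπR
  refine ⟨LinearMap.ker πR, ?_, ?_⟩
  · rw [Submodule.disjoint_def]
    intro x hxV hxK
    have : π x = 0 := hxK
    rw [hid x hxV] at this
    exact this
  · rw [codisjoint_iff, eq_top_iff]
    intro x _
    have hker : x - π x ∈ LinearMap.ker πR := by
      have : π (x - π x) = 0 := by
        rw [map_sub, hid (π x) (hmem x), sub_self]
      exact this
    have hx : x = π x + (x - π x) := by abel
    rw [hx]
    exact Submodule.add_mem_sup (hmem x) hker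
end

section
/- Let k be a field, N and T finite groups with an action ψ : N → Aut(T), and let t_1, …, t_m be representatives of the N-orbits on T. Then the smash product algebra k[T] ⋊ kN is isomorphic as a k-algebra to ⊕_{i=1}^m M_{n_i}(k S_i), where S_i = Stab_N(t_i) and n_i = [N : S_i] is the size of the orbit of t_i. -/
/-- The stabilizer of `t ∈ T` in `N`, for an action `ψ : N → Aut T`. -/
def smashStabilizer {N T : Type*} [Group N] [Group T] (ψ : N →* MulAut T) (t : T) :
    Subgroup N where
  carrier := {n | ψ n t = t}
  one_mem' := by simp
  mul_mem' := by
    intro a b ha hb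
    simp only [Set.mem_setOf_eq, map_mul, MulAut.mul_apply] at *
    rw [hb, ha]
  inv_mem' := by
    intro a ha
    simp only [Set.mem_setOf_eq, map_inv] at *
    exact (MulEquiv.symm_apply_eq (ψ a)).2 ha.symm

set_option linter.unusedSectionVars false
namespace SmashAux

variable {T N : Type*} [Group T] [Group N] [Fintype T] [Fintype N]
  [DecidableEq T] (ψ : N →* MulAut T) {m : ℕ} (t : Fin m → T)

lemma mem_stab {n : N} {x : T} : n ∈ smashStabilizer ψ x ↔ ψ n x = x := Iff.rfl

/-- The coset in `N ⧸ Stab (t i)` corresponding to a point `x` of the orbit of `t i`. -/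
noncomputable def cs (i : Fin m) (x : T) : N ⧸ smashStabilizer ψ (t i) :=
  if h : ∃ n : N, ψ n (t i) = x then QuotientGroup.mk h.choose else QuotientGroup.mk 1

lemma cs_eq {i : Fin m} {x : T} {n : N} (h : ψ n (t i) = x) :
    QuotientGroup.mk n = cs ψ t i x := by
  rw [cs, dif_pos ⟨n, h⟩]
  refine (QuotientGroup.eq).mpr ?_
  have hw : ψ (⟨n, h⟩ : ∃ n : N, ψ n (t i) = x).choose (t i) = x :=
    (⟨n, h⟩ : ∃ n : N, ψ n (t i) = x).choose_spec
  rw [mem_stab, map_mul, map_inv, MulAut.mul_apply, hw, ← h]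
  exact (ψ n).symm_apply_apply _

/-- Coset representatives. -/
noncomputable def gg (i : Fin m) (q : N ⧸ smashStabilizer ψ (t i)) : N := q.out

lemma gg_mk (i : Fin m) (q : N ⧸ smashStabilizer ψ (t i)) :
    QuotientGroup.mk (gg ψ t i q) = q := q.out_eq

lemma apply_of_mk_eq {i : Fin m} {n n' : N} (h : (QuotientGroup.mk n : N ⧸ smashStabilizer ψ (t i)) = QuotientGroup.mk n') :
    ψ n' (t i) = ψ n (t i) := by
  have h2 : n⁻¹ * n' ∈ smashStabilizer ψ (t i) := (QuotientGroup.eq).mp h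
  rw [mem_stab, map_mul, map_inv, MulAut.mul_apply] at h2
  have := congrArg (ψ n) h2
  rwa [MulAut.apply_inv_self] at this

lemma gg_spec {i : Fin m} {x : T} (h : ∃ n : N, ψ n (t i) = x) :
    ψ (gg ψ t i (cs ψ t i x)) (t i) = x := by
  obtain ⟨n, hn⟩ := h
  have h1 : (QuotientGroup.mk n : N ⧸ smashStabilizer ψ (t i)) = QuotientGroup.mk (gg ψ t i (cs ψ t i x)) := by
    rw [gg_mk, cs_eq ψ t hn]
  rw [apply_of_mk_eq ψ t h1, hn]


variable (hreps : ∀ s : T, ∃! i : Fin m, ∃ n : N, ψ n (t i) = s)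

/-- The orbit index of a point. -/
noncomputable def II (x : T) : Fin m := (hreps x).choose

lemma II_spec (x : T) : ∃ n : N, ψ n (t (II ψ t hreps x)) = x := (hreps x).choose_spec.1

lemma II_eq {i : Fin m} {x : T} (h : ∃ n : N, ψ n (t i) = x) : II ψ t hreps x = i :=
  ((hreps x).choose_spec.2 i h).symm

/-- Numbering of the cosets. -/
noncomputable def FF (i : Fin m) :
    (N ⧸ smashStabilizer ψ (t i)) ≃ Fin ((smashStabilizer ψ (t i)).index) :=
  Finite.equivFinOfCardEq (Subgroup.index_eq_card _).symm

/-- The fiber data over an orbit index. -/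
abbrev Fib (i : Fin m) : Type _ :=
  Fin ((smashStabilizer ψ (t i)).index) × Fin ((smashStabilizer ψ (t i)).index) ×
    (smashStabilizer ψ (t i))

/-- Forward map of the groupoid bijection. -/
noncomputable def σf (p : T × N) : Σ i : Fin m, Fib ψ t i := by
  set i := II ψ t hreps p.1 with hi
  refine ⟨i, FF ψ t i (cs ψ t i p.1), FF ψ t i (cs ψ t i ((ψ p.2)⁻¹ p.1)),
    ⟨(gg ψ t i (cs ψ t i p.1))⁻¹ * p.2 * gg ψ t i (cs ψ t i ((ψ p.2)⁻¹ p.1)), ?_⟩⟩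
  obtain ⟨w, hw⟩ := II_spec ψ t hreps p.1
  have h1 : ψ (gg ψ t i (cs ψ t i p.1)) (t i) = p.1 := gg_spec ψ t ⟨w, hw⟩
  have h2 : ψ (gg ψ t i (cs ψ t i ((ψ p.2)⁻¹ p.1))) (t i) = (ψ p.2)⁻¹ p.1 := by
    refine gg_spec ψ t ⟨p.2⁻¹ * w, ?_⟩
    rw [map_mul, map_inv, MulAut.mul_apply, hw]
  rw [mem_stab, map_mul, map_mul, map_inv, MulAut.mul_apply, MulAut.mul_apply, h2,
    MulAut.apply_inv_self, MulAut.inv_def]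
  exact (MulEquiv.symm_apply_eq _).2 h1.symm

/-- Inverse map of the groupoid bijection. -/
noncomputable def τf (z : Σ i : Fin m, Fib ψ t i) : T × N :=
  (ψ (gg ψ t z.1 ((FF ψ t z.1).symm z.2.1)) (t z.1),
    gg ψ t z.1 ((FF ψ t z.1).symm z.2.1) * (z.2.2.2 : N) *
      (gg ψ t z.1 ((FF ψ t z.1).symm z.2.2.1))⁻¹)

lemma τf_σf (p : T × N) : τf ψ t (σf ψ t hreps p) = p := by
  obtain ⟨x, n⟩ := p
  obtain ⟨w, hw⟩ := II_spec ψ t hreps x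
  have h1 : ψ (gg ψ t _ (cs ψ t (II ψ t hreps x) x)) (t (II ψ t hreps x)) = x :=
    gg_spec ψ t ⟨w, hw⟩
  simp only [τf, σf, Equiv.symm_apply_apply]
  erw [Equiv.symm_apply_apply, Equiv.symm_apply_apply]
  rw [Prod.mk.injEq]
  exact ⟨h1, by group⟩

lemma II_of_mem_orbit {i : Fin m} {n : N} : II ψ t hreps (ψ n (t i)) = i :=
  II_eq ψ t hreps ⟨n, rfl⟩

lemma mk_gg_symm_FF (i : Fin m) (a : Fin ((smashStabilizer ψ (t i)).index)) :
    QuotientGroup.mk (gg ψ t i ((FF ψ t i).symm a)) = (FF ψ t i).symm a :=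
  gg_mk ψ t i _

include hreps in
lemma τf_inj : Function.Injective (τf ψ t) := by
  rintro ⟨i₁, a₁, b₁, s₁⟩ ⟨i₂, a₂, b₂, s₂⟩ h
  have h1 := congrArg Prod.fst h
  have h2 := congrArg Prod.snd h
  simp only [τf] at h1 h2
  -- the orbit indices agree
  have hi : i₁ = i₂ := by
    have e1 : II ψ t hreps (ψ (gg ψ t i₁ ((FF ψ t i₁).symm a₁)) (t i₁)) = i₁ :=
      II_of_mem_orbit ψ t hreps
    have e2 : II ψ t hreps (ψ (gg ψ t i₂ ((FF ψ t i₂).symm a₂)) (t i₂)) = i₂ :=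
      II_of_mem_orbit ψ t hreps
    rw [← e1, ← e2, h1]
  subst hi
  -- the first matrix coordinates agree
  have ha : a₁ = a₂ := by
    have c1 := cs_eq ψ t (i := i₁) (x := ψ (gg ψ t i₁ ((FF ψ t i₁).symm a₁)) (t i₁))
      (n := gg ψ t i₁ ((FF ψ t i₁).symm a₁)) rfl
    have c2 := cs_eq ψ t (i := i₁) (x := ψ (gg ψ t i₁ ((FF ψ t i₁).symm a₂)) (t i₁))
      (n := gg ψ t i₁ ((FF ψ t i₁).symm a₂)) rfl
    rw [← h1] at c2
    rw [mk_gg_symm_FF] at c1 c2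
    exact (FF ψ t i₁).symm.injective (c1.trans c2.symm)
  subst ha
  have h4 : (s₁ : N) * (gg ψ t i₁ ((FF ψ t i₁).symm b₁))⁻¹ =
      (s₂ : N) * (gg ψ t i₁ ((FF ψ t i₁).symm b₂))⁻¹ :=
    mul_left_cancel (a := gg ψ t i₁ ((FF ψ t i₁).symm a₁))
      (by rw [← mul_assoc, ← mul_assoc]; exact h2)
  -- the second matrix coordinates agree
  have hb : b₁ = b₂ := by
    have h5 : gg ψ t i₁ ((FF ψ t i₁).symm b₂) =
        gg ψ t i₁ ((FF ψ t i₁).symm b₁) * ((s₁ : N)⁻¹ * (s₂ : N)) := by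
      have h6 : (gg ψ t i₁ ((FF ψ t i₁).symm b₂))⁻¹ =
          (s₂ : N)⁻¹ * ((s₁ : N) * (gg ψ t i₁ ((FF ψ t i₁).symm b₁))⁻¹) := by
        rw [h4]; group
      calc gg ψ t i₁ ((FF ψ t i₁).symm b₂)
          = ((gg ψ t i₁ ((FF ψ t i₁).symm b₂))⁻¹)⁻¹ := by group
        _ = _ := by rw [h6]; group
    have h7 : ((FF ψ t i₁).symm b₁ : N ⧸ smashStabilizer ψ (t i₁)) = (FF ψ t i₁).symm b₂ := by
      rw [← mk_gg_symm_FF ψ t i₁ b₁, ← mk_gg_symm_FF ψ t i₁ b₂]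
      refine (QuotientGroup.eq).mpr ?_
      rw [h5, inv_mul_cancel_left]
      exact mul_mem (inv_mem s₁.2) s₂.2
    exact (FF ψ t i₁).symm.injective h7
  subst hb
  -- the stabilizer elements agree
  have hs : s₁ = s₂ := Subtype.ext (mul_right_cancel h4)
  rw [hs]

/-- The groupoid bijection `T × N ≃ Σ i, Fin nᵢ × Fin nᵢ × Sᵢ`. -/
noncomputable def σE : (T × N) ≃ Σ i : Fin m, Fib ψ t i where
  toFun := σf ψ t hreps
  invFun := τf ψ t
  left_inv := τf_σf ψ t hreps
  right_inv z := τf_inj ψ t hreps (τf_σf ψ t hreps (τf ψ t z))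

lemma σE_symm_apply (z : Σ i : Fin m, Fib ψ t i) : (σE ψ t hreps).symm z = τf ψ t z := rfl

variable (k : Type*) [Field k]

/-- Structural equivalence, pi-type version. -/
noncomputable def structE0 :
    ((Σ i : Fin m, Fib ψ t i) →₀ k) ≃ₗ[k]
      Π i : Fin m, Fin ((smashStabilizer ψ (t i)).index) →
        Fin ((smashStabilizer ψ (t i)).index) → ((smashStabilizer ψ (t i)) →₀ k) :=
  (Finsupp.sigmaFinsuppLEquivPiFinsupp k).trans <|
    LinearEquiv.piCongrRight fun i =>
      (Finsupp.finsuppProdLEquiv k).trans <|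
        (Finsupp.mapRange.linearEquiv (Finsupp.finsuppProdLEquiv k)).trans <|
          (Finsupp.mapRange.linearEquiv (Finsupp.linearEquivFunOnFinite k _ _)).trans <|
            Finsupp.linearEquivFunOnFinite k _ _

lemma structE0_apply (f : (Σ i : Fin m, Fib ψ t i) →₀ k) (i : Fin m)
    (a b : Fin ((smashStabilizer ψ (t i)).index)) (s : smashStabilizer ψ (t i)) :
    structE0 ψ t k f i a b s = f ⟨i, (a, b, s)⟩ := by
  simp only [structE0, LinearEquiv.trans_apply, LinearEquiv.piCongrRight_apply,
    Finsupp.linearEquivFunOnFinite_apply, Finsupp.mapRange.linearEquiv_apply,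
    Finsupp.mapRange.linearMap_apply, Finsupp.mapRange_apply, Function.comp_apply,
    Finsupp.sigmaFinsuppLEquivPiFinsupp_apply,
    LinearEquiv.coe_coe]
  rfl

/-- Structural equivalence between finsupps on the sigma type and the matrix algebra. -/
noncomputable def structE :
    ((Σ i : Fin m, Fib ψ t i) →₀ k) ≃ₗ[k]
      Π i : Fin m, Matrix (Fin ((smashStabilizer ψ (t i)).index))
        (Fin ((smashStabilizer ψ (t i)).index)) (MonoidAlgebra k (smashStabilizer ψ (t i))) :=
  (structE0 ψ t k).trans (LinearEquiv.piCongrRight fun _ => LinearEquiv.piCongrRight fun _ =>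
    LinearEquiv.piCongrRight fun _ => (MonoidAlgebra.coeffLinearEquiv k).symm)

lemma structE_single (i : Fin m) (a b : Fin ((smashStabilizer ψ (t i)).index))
    (s : smashStabilizer ψ (t i)) (c : k) :
    structE ψ t k (Finsupp.single ⟨i, (a, b, s)⟩ c) =
      Pi.single i (Matrix.single a b (MonoidAlgebra.single s c)) := by
  classical
  have hs : (MonoidAlgebra.single s c : MonoidAlgebra k (smashStabilizer ψ (t i))) =
      MonoidAlgebra.ofCoeff (Finsupp.single s c) := rfl
  rw [hs]
  funext j
  by_cases hj : j = i
  · subst hj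
    rw [Pi.single_eq_same]
    funext a' b'
    refine MonoidAlgebra.coeff_injective (Finsupp.ext fun s' => ?_)
    rw [show ((structE ψ t k (Finsupp.single ⟨j, (a, b, s)⟩ c)) j a' b').coeff s' =
        structE0 ψ t k (Finsupp.single ⟨j, (a, b, s)⟩ c) j a' b' s' from rfl,
      structE0_apply]
    have hL : (Finsupp.single (⟨j, (a, (b, s))⟩ : Σ i : Fin m, Fib ψ t i) c)
        ⟨j, (a', (b', s'))⟩ =
        if (⟨j, (a, (b, s))⟩ : Σ i : Fin m, Fib ψ t i) = ⟨j, (a', (b', s'))⟩ then c else 0 :=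
      Finsupp.single_apply
    have hR : Matrix.single a b (MonoidAlgebra.ofCoeff (Finsupp.single s c)) a' b' =
        if a = a' ∧ b = b' then MonoidAlgebra.ofCoeff (Finsupp.single s c) else 0 := rfl
    have hS : (MonoidAlgebra.ofCoeff (Finsupp.single s c) :
        MonoidAlgebra k (smashStabilizer ψ (t j))).coeff s' =
        if s = s' then c else 0 := Finsupp.single_apply
    have hsig : ((⟨j, (a, (b, s))⟩ : Σ i : Fin m, Fib ψ t i) = ⟨j, (a', (b', s'))⟩) ↔
        (a = a' ∧ b = b' ∧ s = s') := by
      simp [Sigma.mk.inj_iff, Prod.ext_iff]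
    rw [hL, hR, apply_ite (fun g : MonoidAlgebra k (smashStabilizer ψ (t j)) => g.coeff s'), hS]
    simp only [hsig, MonoidAlgebra.coeff_zero, Finsupp.coe_zero, Pi.zero_apply]
    split_ifs <;> tauto
  · rw [Pi.single_eq_of_ne hj]
    funext a' b'
    refine MonoidAlgebra.coeff_injective (Finsupp.ext fun s' => ?_)
    have h0 : (Finsupp.single (⟨i, (a, b, s)⟩ : Σ i : Fin m, Fib ψ t i) c)
        ⟨j, (a', (b', s'))⟩ = 0 :=
      Finsupp.single_eq_of_ne fun h => hj (congrArg Sigma.fst h)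
    rw [show ((structE ψ t k (Finsupp.single ⟨i, (a, b, s)⟩ c)) j a' b').coeff s' =
        structE0 ψ t k (Finsupp.single ⟨i, (a, b, s)⟩ c) j a' b' s' from rfl,
      structE0_apply, h0]
    simp

lemma pi_single_mul_ne {ι : Type*} [DecidableEq ι] {f : ι → Type*}
    [∀ i, MulZeroClass (f i)] {i j : ι} (h : i ≠ j) (x : f i) (y : f j) :
    Pi.single i x * Pi.single j y = 0 := by
  funext l
  rw [Pi.mul_apply]
  by_cases hl : l = i
  · subst hl
    rw [Pi.single_eq_of_ne (fun hh : l = j => h hh), mul_zero, Pi.zero_apply]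
  · rw [Pi.single_eq_of_ne hl, zero_mul, Pi.zero_apply]

variable {R : Type*} [Ring R] [Algebra k R]

/-- The full linear equivalence. -/
noncomputable def LL (e : ((T × N) →₀ k) ≃ₗ[k] R) :
    R ≃ₗ[k] Π i : Fin m, Matrix (Fin ((smashStabilizer ψ (t i)).index))
      (Fin ((smashStabilizer ψ (t i)).index)) (MonoidAlgebra k (smashStabilizer ψ (t i))) :=
  e.symm.trans ((Finsupp.domLCongr (σE ψ t hreps)).trans (structE ψ t k))

/-- Basis of the matrix algebra. -/
noncomputable def Bas :
    Module.Basis (Σ i : Fin m, Fib ψ t i) k (Π i : Fin m,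
      Matrix (Fin ((smashStabilizer ψ (t i)).index))
        (Fin ((smashStabilizer ψ (t i)).index)) (MonoidAlgebra k (smashStabilizer ψ (t i)))) :=
  Finsupp.basisSingleOne.map (structE ψ t k)

lemma Bas_apply (z : Σ i : Fin m, Fib ψ t i) :
    Bas ψ t k z = structE ψ t k (Finsupp.single z 1) := by
  simp [Bas, Module.Basis.map_apply]

lemma Bas_apply' (i : Fin m) (a b : Fin ((smashStabilizer ψ (t i)).index))
    (s : smashStabilizer ψ (t i)) :
    Bas ψ t k ⟨i, (a, b, s)⟩ =
      Pi.single i (Matrix.single a b (MonoidAlgebra.single s (1 : k))) := by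
  rw [Bas_apply, structE_single]

lemma LL_symm_Bas (e : ((T × N) →₀ k) ≃ₗ[k] R) (z : Σ i : Fin m, Fib ψ t i) :
    (LL ψ t hreps k e).symm (Bas ψ t k z) = e (Finsupp.single (τf ψ t z) 1) := by
  rw [Bas_apply]
  simp only [LL, LinearEquiv.symm_trans_apply, LinearEquiv.symm_apply_apply]
  rw [Finsupp.domLCongr_symm, Finsupp.domLCongr_single]
  rfl

lemma symm_mul_Bas (e : ((T × N) →₀ k) ≃ₗ[k] R)
    (hmul : ∀ (t₁ t₂ : T) (n₁ n₂ : N) (c d : k),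
      e (Finsupp.single (t₁, n₁) c) * e (Finsupp.single (t₂, n₂) d) =
        if t₁ = ψ n₁ t₂ then e (Finsupp.single (t₁, n₁ * n₂) (c * d)) else 0)
    (z₁ z₂ : Σ i : Fin m, Fib ψ t i) :
    (LL ψ t hreps k e).symm (Bas ψ t k z₁ * Bas ψ t k z₂) =
      (LL ψ t hreps k e).symm (Bas ψ t k z₁) * (LL ψ t hreps k e).symm (Bas ψ t k z₂) := by
  obtain ⟨i₁, a₁, b₁, s₁⟩ := z₁
  obtain ⟨i₂, a₂, b₂, s₂⟩ := z₂
  by_cases hi : i₁ = i₂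
  · subst hi
    by_cases hb : b₁ = a₂
    · subst hb
      -- the product of the basis elements
      have hprod : Bas ψ t k ⟨i₁, (a₁, b₁, s₁)⟩ * Bas ψ t k ⟨i₁, (b₁, b₂, s₂)⟩ =
          Bas ψ t k ⟨i₁, (a₁, b₂, s₁ * s₂)⟩ := by
        rw [Bas_apply', Bas_apply', Bas_apply', ← Pi.single_mul,
          Matrix.single_mul_single_same (c := MonoidAlgebra.single s₁ (1 : k)) a₁ b₁ b₂
            (MonoidAlgebra.single s₂ (1 : k)),
          MonoidAlgebra.single_mul_single, one_mul]
      rw [hprod, LL_symm_Bas, LL_symm_Bas, LL_symm_Bas]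
      simp only [τf]
      rw [hmul]
      have hcond : (ψ (gg ψ t i₁ ((FF ψ t i₁).symm a₁)) (t i₁) : T) =
          ψ (gg ψ t i₁ ((FF ψ t i₁).symm a₁) * ↑s₁ * (gg ψ t i₁ ((FF ψ t i₁).symm b₁))⁻¹)
            (ψ (gg ψ t i₁ ((FF ψ t i₁).symm b₁)) (t i₁)) := by
        rw [← MulAut.mul_apply, ← map_mul, inv_mul_cancel_right, map_mul, MulAut.mul_apply,
          (mem_stab ψ).mp s₁.2]
      rw [if_pos hcond, one_mul]
      refine congrArg e (congrArg (fun p => Finsupp.single p (1 : k)) (Prod.ext rfl ?_))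
      push_cast [Subgroup.coe_mul]
      group
    · -- orthogonal columns: product is zero
      rw [Bas_apply', Bas_apply', ← Pi.single_mul,
        Matrix.single_mul_single_of_ne (c := MonoidAlgebra.single s₁ (1 : k)) a₁ b₁ a₂ hb
          (MonoidAlgebra.single s₂ (1 : k)),
        Pi.single_zero, map_zero, ← Bas_apply', ← Bas_apply', LL_symm_Bas, LL_symm_Bas]
      simp only [τf]
      rw [hmul, if_neg]
      intro h
      apply hb
      -- derive that the cosets agree
      have h2 : ψ ((gg ψ t i₁ ((FF ψ t i₁).symm b₁))⁻¹ * gg ψ t i₁ ((FF ψ t i₁).symm a₂))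
          (t i₁) = t i₁ := by
        have h3 : ψ (↑s₁ * ((gg ψ t i₁ ((FF ψ t i₁).symm b₁))⁻¹ *
            gg ψ t i₁ ((FF ψ t i₁).symm a₂))) (t i₁) = t i₁ := by
          have h4 : ((s₁ : N) * ((gg ψ t i₁ ((FF ψ t i₁).symm b₁))⁻¹ *
              gg ψ t i₁ ((FF ψ t i₁).symm a₂))) =
              (gg ψ t i₁ ((FF ψ t i₁).symm a₁))⁻¹ *
                (gg ψ t i₁ ((FF ψ t i₁).symm a₁) * ↑s₁ *
                  (gg ψ t i₁ ((FF ψ t i₁).symm b₁))⁻¹ * gg ψ t i₁ ((FF ψ t i₁).symm a₂)) := by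
            group
          rw [h4, map_mul, MulAut.mul_apply, map_mul, MulAut.mul_apply, ← h,
            map_inv, MulAut.inv_def]
          exact (ψ _).symm_apply_apply _
        have h5 := congrArg (ψ ((s₁ : N))⁻¹) h3
        rwa [← MulAut.mul_apply, ← map_mul, inv_mul_cancel_left, map_inv, MulAut.inv_def,
          (MulEquiv.symm_apply_eq _).2 ((mem_stab ψ).mp s₁.2).symm] at h5
      have h6 : ((FF ψ t i₁).symm b₁ : N ⧸ smashStabilizer ψ (t i₁)) = (FF ψ t i₁).symm a₂ := by
        rw [← mk_gg_symm_FF ψ t i₁ b₁, ← mk_gg_symm_FF ψ t i₁ a₂]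
        exact (QuotientGroup.eq).mpr h2
      exact (FF ψ t i₁).symm.injective h6
  · -- different orbits: product is zero
    rw [Bas_apply', Bas_apply', pi_single_mul_ne hi, map_zero, ← Bas_apply', ← Bas_apply',
      LL_symm_Bas, LL_symm_Bas]
    simp only [τf]
    rw [hmul, if_neg]
    intro h
    apply hi
    have e1 : II ψ t hreps (ψ (gg ψ t i₁ ((FF ψ t i₁).symm a₁)) (t i₁)) = i₁ :=
      II_of_mem_orbit ψ t hreps
    have e2 : II ψ t hreps (ψ (gg ψ t i₁ ((FF ψ t i₁).symm a₁)) (t i₁)) = i₂ := by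
      refine II_eq ψ t hreps ⟨(gg ψ t i₁ ((FF ψ t i₁).symm a₁) * ↑s₁ *
        (gg ψ t i₁ ((FF ψ t i₁).symm b₁))⁻¹) * gg ψ t i₂ ((FF ψ t i₂).symm a₂), ?_⟩
      rw [map_mul, MulAut.mul_apply]
      exact h.symm
    rw [← e1, e2]

end SmashAux

/-- Let `k` be a field, `N` and `T` finite groups with an action `ψ : N → Aut T`, and let
`t 0, …, t (m-1)` be representatives of the `N`-orbits on `T`. Then the smash product
algebra `R = k[T] ⋊ kN` (any `k`-algebra realizing the smash product multiplication on the
basis indexed by `T × N`) is isomorphic as a `k`-algebra to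
`⊕ᵢ M_{nᵢ}(k Sᵢ)`, where `Sᵢ = Stab_N(t i)` and `nᵢ = [N : Sᵢ]`. -/
theorem smash_product_decomposition (k : Type*) [Field k]
    (T N : Type*) [Group T] [Group N] [Fintype T] [Fintype N] [DecidableEq T]
    (ψ : N →* MulAut T)
    (R : Type*) [Ring R] [Algebra k R] (e : ((T × N) →₀ k) ≃ₗ[k] R)
    (hmul : ∀ (t₁ t₂ : T) (n₁ n₂ : N) (c d : k),
      e (Finsupp.single (t₁, n₁) c) * e (Finsupp.single (t₂, n₂) d) =
        if t₁ = ψ n₁ t₂ then e (Finsupp.single (t₁, n₁ * n₂) (c * d)) else 0)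
    (m : ℕ) (t : Fin m → T)
    (hreps : ∀ s : T, ∃! i : Fin m, ∃ n : N, ψ n (t i) = s) :
    Nonempty (R ≃ₐ[k] Π i : Fin m,
      Matrix (Fin ((smashStabilizer ψ (t i)).index)) (Fin ((smashStabilizer ψ (t i)).index))
        (MonoidAlgebra k (smashStabilizer ψ (t i)))) := by
  classical
  set L := SmashAux.LL ψ t hreps k e with hL
  have hsymm : ∀ x y, L.symm (x * y) = L.symm x * L.symm y := by
    refine (LinearMap.map_mul_iff (L.symm.toLinearMap)).2 ?_
    refine LinearMap.ext_basis (SmashAux.Bas ψ t k) (SmashAux.Bas ψ t k) fun z₁ z₂ => ?_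
    simpa [LinearMap.compr₂_apply, LinearMap.compl₂_apply, LinearMap.mul_apply',
      LinearMap.comp_apply, LinearEquiv.coe_coe] using
      SmashAux.symm_mul_Bas ψ t hreps k e hmul z₁ z₂
  have hLmul : ∀ x y, L (x * y) = L x * L y := fun x y => by
    apply L.symm.injective
    rw [L.symm_apply_apply, hsymm, L.symm_apply_apply, L.symm_apply_apply]
  have h1 : L 1 = 1 := by
    have h := hLmul 1 (L.symm 1)
    rw [one_mul, L.apply_symm_apply, mul_one] at h
    exact h.symm
  exact ⟨AlgEquiv.ofLinearEquiv L h1 hLmul⟩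
end

section
/- Let G be a finite group, L a field with a G-action by field automorphisms, and α : G × G → L* a 2-cocycle (α(g,h)·α(gh,l) = g(α(h,l))·α(g,hl)) whose cohomology class has order m in H²(G, L*), so that there exists f : G → L* with α(g₁,g₂)^m = f(g₁)·g₁(f(g₂))·f(g₁g₂)^{-1}. Suppose K is a field extension of L with a compatible action of a group N surjecting onto G via π : N ↠ G (so h(x) = π(h)(x) for x ∈ L), and suppose K contains elements r_g for each g ∈ G with r_g^m = f(g). Then the function β : N × N → K* defined by β(h₁,h₂) = α(π(h₁),π(h₂)) · r_{π(h₁)}^{-1} · h₁(r_{π(h₂)}^{-1}) · r_{π(h₁h₂)} is a 2-cocycle on N with values in K*, and every value of β is an m-th root of unity. -/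
/-- Let `G`, `N` be finite groups with a surjection `π : N ↠ G`, acting compatibly on fields
`L ⊆ K` (via `σ : G → Aut L`, `τ : N → Aut K`, with `τ n (ι x) = ι (σ (π n) x)`).
Let `α : G × G → Lˣ` be a 2-cocycle and suppose `α^m = ∂f` for some `f : G → Lˣ`, and
`K` contains elements `r g` with `(r g)^m = f g`. Then
`β(h₁,h₂) = α(π h₁, π h₂) · (r (π h₁))⁻¹ · h₁((r (π h₂))⁻¹) · r (π (h₁h₂))`
is a 2-cocycle on `N` with values in `Kˣ`, all of whose values are `m`-th roots of unity. -/
theorem finite_cocycle_inflation (G N : Type*) [Group G] [Finite G] [Group N] [Finite N]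
    (L K : Type*) [Field L] [Field K] (ι : L →+* K)
    (π : N →* G) (hπ : Function.Surjective π)
    (σ : G →* (L ≃+* L)) (τ : N →* (K ≃+* K))
    (hcompat : ∀ (n : N) (x : L), τ n (ι x) = ι (σ (π n) x))
    (α : G → G → Lˣ)
    (hα : ∀ g h l : G, α g h * α (g * h) l =
      Units.map (σ g).toRingHom.toMonoidHom (α h l) * α g (h * l))
    (m : ℕ) (hm : 0 < m) (f : G → Lˣ)
    (hf : ∀ g₁ g₂ : G, (α g₁ g₂) ^ m =
      f g₁ * Units.map (σ g₁).toRingHom.toMonoidHom (f g₂) * (f (g₁ * g₂))⁻¹)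
    (r : G → Kˣ) (hr : ∀ g : G, (r g) ^ m = Units.map ι.toMonoidHom (f g)) :
    (∀ h₁ h₂ h₃ : N,
      (Units.map ι.toMonoidHom (α (π h₁) (π h₂)) * (r (π h₁))⁻¹ *
          Units.map (τ h₁).toRingHom.toMonoidHom (r (π h₂))⁻¹ * r (π (h₁ * h₂))) *
        (Units.map ι.toMonoidHom (α (π (h₁ * h₂)) (π h₃)) * (r (π (h₁ * h₂)))⁻¹ *
          Units.map (τ (h₁ * h₂)).toRingHom.toMonoidHom (r (π h₃))⁻¹ * r (π (h₁ * h₂ * h₃))) =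
      Units.map (τ h₁).toRingHom.toMonoidHom
          (Units.map ι.toMonoidHom (α (π h₂) (π h₃)) * (r (π h₂))⁻¹ *
            Units.map (τ h₂).toRingHom.toMonoidHom (r (π h₃))⁻¹ * r (π (h₂ * h₃))) *
        (Units.map ι.toMonoidHom (α (π h₁) (π (h₂ * h₃))) * (r (π h₁))⁻¹ *
          Units.map (τ h₁).toRingHom.toMonoidHom (r (π (h₂ * h₃)))⁻¹ * r (π (h₁ * (h₂ * h₃))))) ∧
    (∀ h₁ h₂ : N,
      (Units.map ι.toMonoidHom (α (π h₁) (π h₂)) * (r (π h₁))⁻¹ *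
          Units.map (τ h₁).toRingHom.toMonoidHom (r (π h₂))⁻¹ * r (π (h₁ * h₂))) ^ m = 1) := by
  have hτ : ∀ (n₁ n₂ : N) (y : K), τ (n₁ * n₂) y = τ n₁ (τ n₂ y) := by
    intro n₁ n₂ y; rw [map_mul]; rfl
  have hmulapp : ∀ (n₁ n₂ : N) (y : K), (τ n₁ * τ n₂) y = τ n₁ (τ n₂ y) := fun _ _ _ => rfl
  constructor
  · intro h₁ h₂ h₃
    have key : (ι (α (π h₁) (π h₂)) * ι (α (π h₁ * π h₂) (π h₃)) : K) =
        τ h₁ (ι (α (π h₂) (π h₃))) * ι (α (π h₁) (π h₂ * π h₃)) := by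
      have := congrArg (fun u : Lˣ => (ι u : K)) (hα (π h₁) (π h₂) (π h₃))
      simpa [hcompat] using this
    rw [Units.ext_iff]
    simp only [Units.val_mul, Units.coe_map, Units.val_inv_eq_inv_val,
      RingEquiv.toRingHom_eq_coe, RingHom.toMonoidHom_eq_coe, MonoidHom.coe_coe, RingHom.coe_coe,
      map_mul, map_inv₀, hmulapp, mul_assoc]
    have h0 : ∀ g : G, ((r g : K)) ≠ 0 := fun g => Units.ne_zero _
    have h1 : ∀ (n : N) (x : K), x ≠ 0 → τ n x ≠ 0 := fun n x hx => by
      simpa using hx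
    field_simp
    linear_combination key
  · intro h₁ h₂
    have h0 : ∀ g : G, ((r g : K)) ≠ 0 := fun g => Units.ne_zero _
    have hg : ∀ g, ((r g : K)) ^ m = ι (f g) := fun g => by
      have := congrArg (Units.val) (hr g)
      simpa using this
    have hfe : ∀ g₁ g₂ : G, (ι (α g₁ g₂) : K) ^ m * ι (f (g₁ * g₂)) =
        ι (f g₁) * ι (σ g₁ (f g₂)) := by
      intro g₁ g₂
      have h2 : α g₁ g₂ ^ m * f (g₁ * g₂) =
          f g₁ * Units.map (σ g₁).toRingHom.toMonoidHom (f g₂) := by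
        rw [hf]; simp [mul_assoc]
      have := congrArg (fun u : Lˣ => (ι u : K)) h2
      simpa using this
    have hne : ∀ g : G, (ι (f g) : K) ≠ 0 := fun g => by
      rw [← hg]; exact pow_ne_zero _ (h0 g)
    rw [Units.ext_iff]
    simp only [Units.val_pow_eq_pow_val, Units.val_mul, Units.coe_map, Units.val_inv_eq_inv_val,
      RingEquiv.toRingHom_eq_coe, RingHom.toMonoidHom_eq_coe, MonoidHom.coe_coe, RingHom.coe_coe,
      Units.val_one]
    simp only [mul_pow, inv_pow, ← map_pow, hg, hcompat, map_mul π]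
    have h1 : ∀ (n : N) (x : K), x ≠ 0 → τ n x ≠ 0 := fun n x hx => by simpa using hx
    field_simp
    rw [map_div₀, map_one, hcompat, map_pow]
    have hc : ι (σ (π h₁) (f (π h₂) : L)) ≠ 0 := by simp
    field_simp
    linear_combination hfe (π h₁) (π h₂)
end
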